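/- Under the hypotheses where the boundary of the compact convex body F is locally the zero set of a C² function f with ⟨η, ∇f(η)⟩ > 0, for η ∈ ∂F near ξ the set N_F(η) ∩ ∂F° is a singleton, namely {∇f(η)/⟨η, ∇f(η)⟩}. -/

import Mathlib

open RealInnerProductSpace Filter Metric Topology

noncomputable section

abbrev Euc (n : ℕ) := EuclideanSpace ℝ (Fin n)

/-- The polar set `F°`. -/
def polarSet {n : ℕ} (F : Set (Euc n)) : Set (Euc n) := {y | ∀ x ∈ F, ⟪x, y⟫ ≤ 1}

/-- The normal cone of convex analysis to `F` at `ξ`. -/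
def normalCone {n : ℕ} (F : Set (Euc n)) (ξ : Euc n) : Set (Euc n) :=
  {ζ | ∀ y ∈ F, ⟪y - ξ, ζ⟫ ≤ 0}

/-- The tangent hyperplane to `F` at `ξ`. -/
def tangentHyp {n : ℕ} (F : Set (Euc n)) (ξ : Euc n) : Set (Euc n) :=
  {v | ∀ ζ ∈ normalCone F ξ, ⟪v, ζ⟫ = 0}

/-- The 2-dimensional plane `P(η, u) = span{∇f(η), u} + η`. -/
def planeP {n : ℕ} (f : Euc n → ℝ) (η u : Euc n) : Set (Euc n) :=
  {y | ∃ a b : ℝ, y = η + a • gradient f η + b • u}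

/-- `η* = ∇f(η)/⟨η, ∇f(η)⟩`, the unique element of `N_F(η) ∩ ∂F°`. -/
def etaStar {n : ℕ} (f : Euc n → ℝ) (η : Euc n) : Euc n :=
  (⟪η, gradient f η⟫)⁻¹ • gradient f η

/-- The 2-dimensional modulus of strict convexity `Ĉ_F(r, η, u)`. -/
def Chat {n : ℕ} (F : Set (Euc n)) (f : Euc n → ℝ) (r : ℝ) (η u : Euc n) : ℝ :=
  sInf {t | ∃ y, y ∈ F ∧ y ∈ planeP f η u ∧ r ≤ ‖η - y‖ ∧ t = ⟪η - y, etaStar f η⟫}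

/-- The tangent vector at `η` corresponding to a tangent vector `u` at `ξ`: the
coordinates `j ≠ i` agree with those of `u` and the `i`-th coordinate is determined
by tangency at `η`.  For `u = e_j` this is the tangent basis vector `u^j(η)`. -/
def uAt {n : ℕ} (f : Euc n → ℝ) (i : Fin n) (u : Euc n) (η : Euc n) : Euc n :=
  ∑ j ∈ Finset.univ.erase i,
    u j • (EuclideanSpace.single j (1:ℝ) -
      (gradient f η j / gradient f η i) • EuclideanSpace.single i (1:ℝ))

/-- The directional lower curvature `γ̂_F(ξ, u(ξ))`, a liminf of the directional modulus
of strict convexity over `r²` as `(r, η) → (0⁺, ξ)`, `η ∈ ∂F`. -/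
def gammaDir {n : ℕ} (F : Set (Euc n)) (f : Euc n → ℝ) (i : Fin n) (ξ u : Euc n) : ℝ :=
  Filter.liminf (fun p : ℝ × Euc n => Chat F f p.1 p.2 (uAt f i u p.2) / p.1 ^ 2)
    ((𝓝[>] (0:ℝ)) ×ˢ (𝓝 ξ ⊓ 𝓟 (frontier F)))

/-- The Hessian bilinear form `⟨∇²f(ξ)u, v⟩`. -/
def hessQ {n : ℕ} (f : Euc n → ℝ) (ξ u v : Euc n) : ℝ := ⟪fderiv ℝ (gradient f) ξ u, v⟫

private lemma inner_gradient_eq' {n : ℕ} (f : Euc n → ℝ) (x v : Euc n) :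
    ⟪gradient f x, v⟫ = fderiv ℝ f x v :=
  InnerProductSpace.toDual_symm_apply

private lemma nonpos_of_small {X K ε₀ : ℝ} (hε₀ : 0 < ε₀)
    (h : ∀ ε : ℝ, 0 < ε → ε ≤ ε₀ → X ≤ ε * K) : X ≤ 0 := by
  rcases le_or_gt K 0 with hK | hK
  · have := h ε₀ hε₀ le_rfl
    nlinarith
  · by_contra hX
    push_neg at hX
    have hε : 0 < min ε₀ (X / (2 * K)) := lt_min hε₀ (by positivity)
    have h1 := h _ hε (min_le_left _ _)
    have h2 : min ε₀ (X / (2 * K)) ≤ X / (2 * K) := min_le_right _ _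
    have h3 : min ε₀ (X / (2 * K)) * K ≤ (X / (2 * K)) * K :=
      mul_le_mul_of_nonneg_right h2 hK.le
    have h4 : (X / (2 * K)) * K = X / 2 := by field_simp
    linarith

set_option maxHeartbeats 2000000 in
/-- Under the standing C² hypotheses, for boundary points `η` near `ξ` the set
`N_F(η) ∩ ∂F°` is the singleton `{∇f(η)/⟨η, ∇f(η)⟩}`. -/
theorem normalCone_inter_frontier_polar_singleton
    {n : ℕ} (hn : 2 ≤ n) (F : Set (Euc n)) (hF : IsCompact F) (hFc : Convex ℝ F)
    (h0 : (0 : Euc n) ∈ interior F) (ξ : Euc n) (hξ : ξ ∈ frontier F)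
    (f : Euc n → ℝ) (δ : ℝ) (hδ : 0 < δ) (hf : ContDiffOn ℝ 2 f (Metric.ball ξ δ))
    (hFf : F ⊆ {x | f x ≤ 0}) (hgr : 0 < ⟪ξ, gradient f ξ⟫)
    (hbd : ∀ x ∈ Metric.ball ξ δ, (x ∈ frontier F ↔ f x = 0))
    (δ' : ℝ) (hδ'pos : 0 < δ') (hδ'le : δ' ≤ δ)
    (hδ' : ∀ y ∈ Metric.ball ξ δ', 0 < ⟪y, gradient f y⟫) :
    ∀ η ∈ frontier F ∩ Metric.ball ξ δ',
      normalCone F η ∩ frontier (polarSet F) = {etaStar f η} := by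
  intro η hη
  obtain ⟨hηF, hηB⟩ := hη
  rw [Metric.mem_ball] at hηB
  have hηB' : η ∈ Metric.ball ξ δ := Metric.mem_ball.mpr (lt_of_lt_of_le hηB hδ'le)
  have hc : 0 < ⟪η, gradient f η⟫ := hδ' η (Metric.mem_ball.mpr hηB)
  set g := gradient f η with hgdef
  have hgne : g ≠ 0 := by
    intro h
    rw [h, inner_zero_right] at hc
    exact lt_irrefl 0 hc
  have hFclosed : IsClosed F := hF.isClosed
  have hηmem : η ∈ F := hFclosed.frontier_subset hηF
  have hfη : f η = 0 := (hbd η hηB').mp hηF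
  have hdiff : ∀ x ∈ Metric.ball ξ δ, DifferentiableAt ℝ f x := fun x hx =>
    (hf.differentiableOn (by norm_num)).differentiableAt (isOpen_ball.mem_nhds hx)
  -- first-order optimality condition
  have hfoc : ∀ y ∈ F, ⟪y - η, g⟫ ≤ 0 := by
    intro y hy
    have hφ : HasDerivAt (fun t : ℝ => f (η + t • (y - η))) (fderiv ℝ f η (y - η)) 0 := by
      have hline : HasDerivAt (fun t : ℝ => η + t • (y - η)) (y - η) 0 := by
        simpa using ((hasDerivAt_id (0:ℝ)).smul_const (y - η)).const_add η
      have h0' : η + (0:ℝ) • (y - η) = η := by simp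
      have hfd : HasFDerivAt f (fderiv ℝ f η) (η + (0:ℝ) • (y - η)) := by
        rw [h0']; exact (hdiff η hηB').hasFDerivAt
      exact hfd.comp_hasDerivAt 0 hline
    have hs := hasDerivAt_iff_tendsto_slope.mp hφ
    have hmono : 𝓝[Set.Ioi (0:ℝ)] 0 ≤ 𝓝[≠] (0:ℝ) :=
      nhdsWithin_mono 0 (fun x hx => ne_of_gt hx)
    have hle : fderiv ℝ f η (y - η) ≤ 0 := by
      refine le_of_tendsto (hs.mono_left hmono) ?_
      filter_upwards [Ioc_mem_nhdsGT_of_mem (Set.left_mem_Ico.mpr one_pos)] with t ht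
      have hmem : η + t • (y - η) ∈ F := by
        have h1 : (1 - t) • η + t • y ∈ F :=
          hFc hηmem hy (by linarith [ht.2]) ht.1.le (by ring)
        have h2 : η + t • (y - η) = (1 - t) • η + t • y := by module
        rw [h2]; exact h1
      have hfle : f (η + t • (y - η)) ≤ 0 := hFf hmem
      rw [slope_def_field]
      have h0' : η + (0:ℝ) • (y - η) = η := by simp
      rw [h0', hfη, sub_zero, sub_zero]
      exact div_nonpos_of_nonpos_of_nonneg hfle ht.1.le
    calc ⟪y - η, g⟫ = ⟪g, y - η⟫ := real_inner_comm _ _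
      _ = fderiv ℝ f η (y - η) := inner_gradient_eq' f η (y - η)
      _ ≤ 0 := hle
  have hstar_def : etaStar f η = (⟪η, g⟫)⁻¹ • g := rfl
  have hstar_inner : ⟪η, etaStar f η⟫ = 1 := by
    rw [hstar_def, real_inner_smul_right]
    exact inv_mul_cancel₀ (ne_of_gt hc)
  have hstar_nc : etaStar f η ∈ normalCone F η := by
    intro y hy
    rw [hstar_def, real_inner_smul_right]
    exact mul_nonpos_of_nonneg_of_nonpos (inv_nonneg.mpr hc.le) (hfoc y hy)
  have hstar_polar : etaStar f η ∈ polarSet F := by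
    intro x hx
    rw [hstar_def, real_inner_smul_right]
    have h1 : ⟪x, g⟫ ≤ ⟪η, g⟫ := by
      have := hfoc x hx; rw [inner_sub_left] at this; linarith
    calc (⟪η, g⟫)⁻¹ * ⟪x, g⟫ ≤ (⟪η, g⟫)⁻¹ * ⟪η, g⟫ :=
          mul_le_mul_of_nonneg_left h1 (inv_nonneg.mpr hc.le)
      _ = 1 := inv_mul_cancel₀ (ne_of_gt hc)
  have hpc : IsClosed (polarSet F) := by
    have heq : polarSet F = ⋂ x ∈ F, {y : Euc n | ⟪x, y⟫ ≤ 1} := by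
      ext y; simp [polarSet]
    rw [heq]
    exact isClosed_biInter fun x _ =>
      isClosed_le (Continuous.inner continuous_const continuous_id) continuous_const
  have hstar_front : etaStar f η ∈ frontier (polarSet F) := by
    rw [frontier_eq_closure_inter_closure]
    refine ⟨subset_closure hstar_polar, ?_⟩
    have htend : Tendsto (fun k : ℕ => (1 + 1/(k+1 : ℝ)) • etaStar f η) atTop
        (𝓝 (etaStar f η)) := by
      have h1 : Tendsto (fun k : ℕ => (1 + 1/(k+1 : ℝ))) atTop (𝓝 1) := by
        have := tendsto_one_div_add_atTop_nhds_zero_nat (𝕜 := ℝ)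
        simpa using tendsto_const_nhds.add this
      simpa using h1.smul_const (etaStar f η)
    refine mem_closure_of_tendsto htend (Filter.Eventually.of_forall fun k => ?_)
    intro hmem
    have h2 := hmem η hηmem
    rw [real_inner_smul_right, hstar_inner, mul_one] at h2
    have h3 : (0:ℝ) < 1/(k+1:ℝ) := by positivity
    linarith
  ext ζ
  simp only [Set.mem_inter_iff, Set.mem_singleton_iff]
  constructor
  · rintro ⟨hζnc, hζfr⟩
    have hζpolar : ζ ∈ polarSet F := hpc.frontier_subset hζfr
    have hζnotint : ζ ∉ interior (polarSet F) := by
      intro h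
      rw [frontier_eq_closure_inter_closure] at hζfr
      obtain ⟨w, hw1, hw2⟩ := mem_closure_iff.mp hζfr.2 _ isOpen_interior h
      exact hw2 (interior_subset hw1)
    -- ⟪η, ζ⟫ = 1
    have hηζ : ⟪η, ζ⟫ = 1 := by
      have hle1 : ⟪η, ζ⟫ ≤ 1 := hζpolar η hηmem
      by_contra hne
      have hlt : ⟪η, ζ⟫ < 1 := lt_of_le_of_ne hle1 hne
      obtain ⟨R, hR⟩ := hF.isBounded.subset_closedBall (0 : Euc n)
      have hR'pos : (0:ℝ) < max R 1 := lt_of_lt_of_le one_pos (le_max_right _ _)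
      have hball : Metric.ball ζ ((1 - ⟪η, ζ⟫)/(max R 1)) ⊆ polarSet F := by
        intro y hy x hx
        have hxnorm : ‖x‖ ≤ max R 1 := by
          have := hR hx
          rw [Metric.mem_closedBall, dist_zero_right] at this
          exact le_trans this (le_max_left _ _)
        have h1 : ⟪x, ζ⟫ ≤ ⟪η, ζ⟫ := by
          have := hζnc x hx; rw [inner_sub_left] at this; linarith
        have h2 : ⟪x, y - ζ⟫ ≤ ‖x‖ * ‖y - ζ‖ := real_inner_le_norm _ _
        have h3 : ‖y - ζ‖ < (1 - ⟪η, ζ⟫)/(max R 1) := by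
          rw [Metric.mem_ball] at hy
          rw [← dist_eq_norm]; exact hy
        have h4 : ⟪x, y⟫ = ⟪x, ζ⟫ + ⟪x, y - ζ⟫ := by
          rw [← inner_add_right]
          congr 1
          abel
        have h5 : ‖x‖ * ‖y - ζ‖ ≤ (max R 1) * ‖y - ζ‖ :=
          mul_le_mul_of_nonneg_right hxnorm (norm_nonneg _)
        have h6 : (max R 1) * ‖y - ζ‖ < (max R 1) * ((1 - ⟪η, ζ⟫)/(max R 1)) :=
          mul_lt_mul_of_pos_left h3 hR'pos
        have h7 : (max R 1) * ((1 - ⟪η, ζ⟫)/(max R 1)) = 1 - ⟪η, ζ⟫ := by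
          field_simp
        linarith
      exact hζnotint (mem_interior.mpr
        ⟨_, hball, isOpen_ball, mem_ball_self (div_pos (by linarith) hR'pos)⟩)
    -- main claim: half-space inclusion
    have hkey : ∀ v : Euc n, ⟪v, g⟫ < 0 → ⟪v, ζ⟫ ≤ 0 := by
      intro v hv
      have hfd : ContinuousOn (fderiv ℝ f) (Metric.ball ξ δ) :=
        hf.continuousOn_fderiv_of_isOpen isOpen_ball (by norm_num)
      have hgc : ContinuousOn (fun x => gradient f x) (Metric.ball ξ δ) :=
        (InnerProductSpace.toDual ℝ (Euc n)).symm.continuous.comp_continuousOn hfd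
      have hGat : ContinuousAt (fun x => (⟪gradient f x, v⟫ : ℝ)) η :=
        ((hgc.continuousAt (isOpen_ball.mem_nhds hηB')).inner continuousAt_const)
      have hGη : (⟪gradient f η, v⟫ : ℝ) < 0 := by
        rw [real_inner_comm]; exact hv
      have hev : ∀ᶠ x in 𝓝 η, ⟪gradient f x, v⟫ < 0 ∧ x ∈ Metric.ball ξ δ' := by
        refine Filter.Eventually.and ?_ (isOpen_ball.mem_nhds (Metric.mem_ball.mpr hηB))
        exact hGat.eventually_lt_const hGη
      obtain ⟨ρ, hρpos, hρ⟩ := Metric.eventually_nhds_iff.mp hev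
      set t := ρ / (2 * (‖v‖ + 1)) with htdef
      have htpos : 0 < t := by positivity
      have hε₀pos : 0 < min (ρ / (2 * (‖η‖ + 1))) 1 := lt_min (by positivity) one_pos
      have hmain : ∀ ε : ℝ, 0 < ε → ε ≤ min (ρ / (2 * (‖η‖ + 1))) 1 →
          t * ⟪v, ζ⟫ ≤ ε * 1 := by
        intro ε hεpos hεle
        have hε1 : ε ≤ 1 := le_trans hεle (min_le_right _ _)
        have hεη : ε ≤ ρ / (2 * (‖η‖ + 1)) := le_trans hεle (min_le_left _ _)
        set η₁ := (1 - ε) • η with hη₁def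
        have hη₁int : η₁ ∈ interior F := by
          have := hFc.combo_interior_closure_mem_interior (a := ε) (b := 1 - ε)
            h0 (subset_closure hηmem) hεpos (by linarith) (by ring)
          simpa [hη₁def] using this
        have hv2 : 2 * (t * ‖v‖) + 2 * t = ρ := by
          rw [htdef]; field_simp
        have hη2 : 2 * (ε * ‖η‖) + 2 * ε ≤ ρ := by
          have := (le_div_iff₀ (by positivity : (0:ℝ) < 2 * (‖η‖ + 1))).mp hεη
          nlinarith
        have hball : ∀ s : ℝ, s ∈ Set.Icc 0 t → dist (η₁ + s • v) η < ρ := by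
          intro s hs
          have h1 : η₁ + s • v - η = s • v - ε • η := by rw [hη₁def]; module
          have h2 : ‖η₁ + s • v - η‖ ≤ s * ‖v‖ + ε * ‖η‖ := by
            rw [h1]
            refine le_trans (norm_sub_le _ _) ?_
            rw [norm_smul, norm_smul, Real.norm_eq_abs, Real.norm_eq_abs,
              abs_of_nonneg hs.1, abs_of_nonneg hεpos.le]
          have h3 : s * ‖v‖ ≤ t * ‖v‖ := mul_le_mul_of_nonneg_right hs.2 (norm_nonneg v)
          rw [dist_eq_norm]
          linarith
        have hderiv : ∀ s ∈ Set.Icc (0:ℝ) t,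
            HasDerivAt (fun s : ℝ => f (η₁ + s • v)) ⟪gradient f (η₁ + s • v), v⟫ s := by
          intro s hs
          have hmem := hρ (hball s hs)
          have hx : η₁ + s • v ∈ Metric.ball ξ δ :=
            Metric.mem_ball.mpr (lt_of_lt_of_le (Metric.mem_ball.mp hmem.2) hδ'le)
          have hline : HasDerivAt (fun s : ℝ => η₁ + s • v) v s := by
            simpa using ((hasDerivAt_id s).smul_const v).const_add η₁
          have h := (hdiff _ hx).hasFDerivAt.comp_hasDerivAt s hline
          rw [inner_gradient_eq']
          exact h
        have hanti : StrictAntiOn (fun s : ℝ => f (η₁ + s • v)) (Set.Icc 0 t) := by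
          apply strictAntiOn_of_deriv_neg (convex_Icc 0 t)
          · exact fun s hs => ((hderiv s hs).continuousAt).continuousWithinAt
          · intro s hs
            rw [interior_Icc] at hs
            rw [(hderiv s ⟨hs.1.le, hs.2.le⟩).deriv]
            exact (hρ (hball s ⟨hs.1.le, hs.2.le⟩)).1
        have hT : η₁ + t • v ∈ F := by
          have hcontline : Continuous (fun s : ℝ => η₁ + s • v) :=
            continuous_const.add (continuous_id.smul continuous_const)
          set T := Set.Icc (0:ℝ) t ∩ {s : ℝ | η₁ + s • v ∈ F} with hTdef
          have hTcomp : IsCompact T :=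
            isCompact_Icc.inter_right (hFclosed.preimage hcontline)
          have hTne : T.Nonempty :=
            ⟨0, ⟨le_refl 0, htpos.le⟩, by simpa using interior_subset hη₁int⟩
          have ht₀ := hTcomp.sSup_mem hTne
          set t₀ := sSup T with ht₀def
          have ht₀t : t₀ ≤ t := ht₀.1.2
          rcases eq_or_lt_of_le ht₀t with heq | hlt
          · rw [← heq]; exact ht₀.2
          · exfalso
            have hseq : Tendsto (fun k : ℕ => t₀ + (t - t₀)/(k+1:ℝ)) atTop (𝓝 t₀) := by
              have h1 : Tendsto (fun k : ℕ => (t - t₀) * (1/(k+1:ℝ))) atTop (𝓝 0) := by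
                simpa using (tendsto_one_div_add_atTop_nhds_zero_nat.const_mul (t - t₀))
              simpa [div_eq_mul_inv] using tendsto_const_nhds.add h1
            have hzfc : (η₁ + t₀ • v) ∈ closure Fᶜ := by
              have htend2 : Tendsto (fun k : ℕ => η₁ + (t₀ + (t - t₀)/(k+1:ℝ)) • v) atTop
                  (𝓝 (η₁ + t₀ • v)) := (hseq.smul_const v).const_add η₁
              refine mem_closure_of_tendsto htend2 (Filter.Eventually.of_forall fun k => ?_)
              intro hmem
              have hkpos : (0:ℝ) < (t - t₀)/(k+1:ℝ) :=
                div_pos (by linarith) (by positivity)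
              have hk1 : (t - t₀)/(k+1:ℝ) ≤ t - t₀ :=
                div_le_self (by linarith) (by norm_num)
              have hsk : t₀ + (t - t₀)/(k+1:ℝ) ∈ T :=
                ⟨⟨by linarith [ht₀.1.1], by linarith⟩, hmem⟩
              have := le_csSup hTcomp.bddAbove hsk
              linarith
            have hzfr : (η₁ + t₀ • v) ∈ frontier F := by
              rw [frontier_eq_closure_inter_closure]
              exact ⟨subset_closure ht₀.2, hzfc⟩
            rcases eq_or_lt_of_le ht₀.1.1 with h00 | h00
            · have hz : η₁ + t₀ • v = η₁ := by rw [← h00]; simp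
              rw [hz] at hzfc
              obtain ⟨w, hw1, hw2⟩ := mem_closure_iff.mp hzfc _ isOpen_interior hη₁int
              exact hw2 (interior_subset hw1)
            · have hzball : η₁ + t₀ • v ∈ Metric.ball ξ δ := by
                have := (hρ (hball t₀ ⟨ht₀.1.1, ht₀t⟩)).2
                exact Metric.mem_ball.mpr (lt_of_lt_of_le (Metric.mem_ball.mp this) hδ'le)
              have hfz : f (η₁ + t₀ • v) = 0 := (hbd _ hzball).mp hzfr
              have hlt2 : f (η₁ + t₀ • v) < f (η₁ + (0:ℝ) • v) :=
                hanti ⟨le_refl 0, htpos.le⟩ ⟨ht₀.1.1, ht₀t⟩ h00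
              have hfη₁ : f η₁ ≤ 0 := hFf (interior_subset hη₁int)
              simp only [zero_smul, add_zero] at hlt2
              linarith
        have hfinal := hζnc _ hT
        have heq2 : η₁ + t • v - η = t • v - ε • η := by rw [hη₁def]; module
        rw [heq2, inner_sub_left, real_inner_smul_left, real_inner_smul_left, hηζ] at hfinal
        linarith
      have hX := nonpos_of_small hε₀pos hmain
      nlinarith
    have hkey' : ∀ v : Euc n, ⟪v, g⟫ ≤ 0 → ⟪v, ζ⟫ ≤ 0 := by
      intro v hv
      have hg2 : (0:ℝ) < ⟪g, g⟫ := by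
        rw [real_inner_self_eq_norm_sq]
        have : 0 < ‖g‖ := norm_pos_iff.mpr hgne
        positivity
      have hmain : ∀ s : ℝ, 0 < s → s ≤ 1 → ⟪v, ζ⟫ ≤ s * ⟪g, ζ⟫ := by
        intro s hs _
        have h1 : ⟪v - s • g, g⟫ < 0 := by
          rw [inner_sub_left, real_inner_smul_left]
          nlinarith
        have h2 := hkey _ h1
        rw [inner_sub_left, real_inner_smul_left] at h2
        linarith
      exact nonpos_of_small one_pos hmain
    have hperp : ∀ v : Euc n, ⟪v, g⟫ = 0 → ⟪v, ζ⟫ = 0 := by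
      intro v hv
      have h1 := hkey' v (le_of_eq hv)
      have h2 := hkey' (-v) (by rw [inner_neg_left, hv, neg_zero])
      rw [inner_neg_left] at h2
      linarith
    have hg2 : (0:ℝ) < ⟪g, g⟫ := by
        rw [real_inner_self_eq_norm_sq]
        have : 0 < ‖g‖ := norm_pos_iff.mpr hgne
        positivity
    set lam : ℝ := ⟪ζ, g⟫ / ⟪g, g⟫ with hlamdef
    have hwperp : ⟪ζ - lam • g, g⟫ = 0 := by
      rw [inner_sub_left, real_inner_smul_left, hlamdef,
        div_mul_cancel₀ _ (ne_of_gt hg2), sub_self]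
    have hwz : ⟪ζ - lam • g, ζ⟫ = 0 := hperp _ hwperp
    have hww : ⟪ζ - lam • g, ζ - lam • g⟫ = 0 := by
      rw [inner_sub_right, hwz, real_inner_smul_right, hwperp, mul_zero, sub_zero]
    have hζeq : ζ = lam • g := by
      have := inner_self_eq_zero.mp hww
      rwa [sub_eq_zero] at this
    have h1 : lam * ⟪η, g⟫ = 1 := by
      rw [hζeq, real_inner_smul_right] at hηζ
      linarith
    have hlamval : lam = (⟪η, g⟫)⁻¹ := by
      rw [inv_eq_one_div, eq_div_iff (ne_of_gt hc)]
      exact h1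
    rw [hζeq, hlamval]
    exact hstar_def.symm
  · rintro rfl
    exact ⟨hstar_nc, hstar_front⟩
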